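/- With the same definitions, the momentum equation ∂ₜ(h u) + ∂ₓ(h u² + g h²/2) + g h ∂ₓ z_b = 0 holds on I × ℝ; i.e., the triple (h, u, z_b) given in Proposition 2.1 is an exact solution of the Shallow Water–Exner system (mass, momentum, and Exner equations). -/

import Mathlib

theorem stmt_11 (A p u_cr q g α β C : ℝ)
    (hA : 0 < A) (hp : 0 < p) (hucr : 0 ≤ u_cr) (hq : 0 < q) (hg : 0 < g)
    (a b : ℝ) (hIpos : ∀ x ∈ Set.Ioo a b, 0 < α * x + β)
    (u h z0 qb : ℝ → ℝ) (zb : ℝ → ℝ → ℝ)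
    (hu : ∀ x, u x = Real.sqrt (((α * x + β) / A) ^ ((1 : ℝ) / p) + u_cr ^ 2))
    (hupos : ∀ x ∈ Set.Ioo a b, 0 < u x)
    (hh : ∀ x, h x = q / u x)
    (hz0 : ∀ x, z0 x = -((u x) ^ 3 + 2 * g * q) / (2 * g * u x) + C)
    (hzb : ∀ x t, zb x t = -α * t + z0 x)
    (hqb : ∀ x, qb x = A * ((u x) ^ 2 - u_cr ^ 2) ^ (p : ℝ)) :
    ∀ x ∈ Set.Ioo a b, ∀ t : ℝ,
      (deriv (fun _ : ℝ => h x) t + deriv (fun y => h y * u y) x = 0) ∧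
      (deriv (fun _ : ℝ => h x * u x) t
        + deriv (fun y => h y * (u y) ^ 2 + g * (h y) ^ 2 / 2) x
        + g * h x * deriv (fun y => zb y t) x = 0) ∧
      (deriv (fun s => zb x s) t + deriv qb x = 0) := by
  intro x hx t
  have hw : 0 < α * x + β := hIpos x hx
  have hux : 0 < u x := hupos x hx
  have hrx : 0 < (α * x + β) / A := div_pos hw hA
  -- differentiability of u at x
  have h1 : HasDerivAt (fun y : ℝ => α * y + β) α x := by
    simpa using ((hasDerivAt_id x).const_mul α).add_const β
  have h2 : HasDerivAt (fun y : ℝ => (α * y + β) / A) (α / A) x := h1.div_const A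
  have h3 := h2.rpow_const (p := (1 : ℝ) / p) (Or.inl hrx.ne')
  have h4 := h3.add_const (u_cr ^ 2)
  have hFx : 0 < ((α * x + β) / A) ^ ((1 : ℝ) / p) + u_cr ^ 2 :=
    add_pos_of_pos_of_nonneg (Real.rpow_pos_of_pos hrx _) (sq_nonneg _)
  have h5 := h4.sqrt hFx.ne'
  have huF : u = fun y => Real.sqrt (((α * y + β) / A) ^ ((1 : ℝ) / p) + u_cr ^ 2) :=
    funext hu
  obtain ⟨D, hU⟩ : ∃ D, HasDerivAt u D x := ⟨_, huF ▸ h5⟩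
  have hmem : ∀ᶠ y in nhds x, y ∈ Set.Ioo a b := isOpen_Ioo.mem_nhds hx
  -- mass equation
  have mass : deriv (fun _ : ℝ => h x) t + deriv (fun y => h y * u y) x = 0 := by
    have hev : (fun y => h y * u y) =ᶠ[nhds x] fun _ => q := by
      filter_upwards [hmem] with y hy
      have := (hupos y hy).ne'
      rw [hh]; field_simp
    rw [hev.deriv_eq]
    simp
  refine ⟨mass, ?_, ?_⟩
  · -- momentum equation
    have hd2 : HasDerivAt (fun y => 2 * (u y) ^ 2) (2 * ((2 : ℕ) * u x ^ 1 * D)) x :=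
      (hU.pow 2).const_mul 2
    have hG : HasDerivAt (fun y => q * u y + g * q ^ 2 / (2 * (u y) ^ 2))
        (q * D + (0 * (2 * (u x) ^ 2) - g * q ^ 2 * (2 * ((2 : ℕ) * u x ^ 1 * D)))
          / (2 * (u x) ^ 2) ^ 2) x :=
      (hU.const_mul q).add
        ((hasDerivAt_const x (g * q ^ 2)).div hd2 (by positivity))
    have hevG : (fun y => h y * (u y) ^ 2 + g * (h y) ^ 2 / 2)
        =ᶠ[nhds x] fun y => q * u y + g * q ^ 2 / (2 * (u y) ^ 2) := by
      filter_upwards [hmem] with y hy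
      have hy' := (hupos y hy).ne'
      rw [hh]; field_simp
    have hz1 : HasDerivAt (fun y => (u y) ^ 2 / (2 * g)) (((2 : ℕ) * u x ^ 1 * D) / (2 * g)) x :=
      (hU.pow 2).div_const _
    have hz2 : HasDerivAt (fun y => q / u y) ((0 * u x - q * D) / u x ^ 2) x :=
      (hasDerivAt_const x q).div hU hux.ne'
    have hZ : HasDerivAt (fun y => -α * t + (-((u y) ^ 2 / (2 * g)) - q / u y + C)) _ x :=
      (hasDerivAt_const x (-α * t)).add (((hz1.neg.sub hz2).add_const C))
    have hevZ : (fun y => zb y t)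
        =ᶠ[nhds x] fun y => -α * t + (-((u y) ^ 2 / (2 * g)) - q / u y + C) := by
      filter_upwards [hmem] with y hy
      have hy' := (hupos y hy).ne'
      rw [hzb, hz0]
      have : -((u y) ^ 3 + 2 * g * q) / (2 * g * u y) = -((u y) ^ 2 / (2 * g)) - q / u y := by
        field_simp; ring
      rw [this]
    rw [hevG.deriv_eq, hG.deriv, hevZ.deriv_eq, hZ.deriv, deriv_const, hh]
    have hux' := hux.ne'
    have hg' := hg.ne'
    field_simp
    ring
  · -- Exner equation
    have hT : HasDerivAt (fun s => zb x s) (-α) t := by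
      have : (fun s => zb x s) = fun s => -α * s + z0 x := funext fun s => hzb x s
      rw [this]
      simpa using ((hasDerivAt_id t).const_mul (-α)).add_const (z0 x)
    have hevQ : qb =ᶠ[nhds x] fun y => α * y + β := by
      filter_upwards [hmem] with y hy
      have hwy : 0 < α * y + β := hIpos y hy
      have hry : (0:ℝ) ≤ (α * y + β) / A := (div_pos hwy hA).le
      have hsq : (u y) ^ 2 = ((α * y + β) / A) ^ ((1 : ℝ) / p) + u_cr ^ 2 := by
        rw [hu]
        exact Real.sq_sqrt (by positivity)
      rw [hqb, hsq]
      have : (((α * y + β) / A) ^ ((1 : ℝ) / p) + u_cr ^ 2 - u_cr ^ 2)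
          = ((α * y + β) / A) ^ ((1 : ℝ) / p) := by ring
      rw [this, ← Real.rpow_mul hry, one_div, inv_mul_cancel₀ hp.ne', Real.rpow_one]
      field_simp
    rw [hevQ.deriv_eq, hT.deriv]
    have : HasDerivAt (fun y : ℝ => α * y + β) α x := h1
    rw [this.deriv]
    ring
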